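/- Let k ≥ 3 and q ≥ 1 be integers, let G = (V,E) be a k-cycle graph over n agents with uniform node weights w(v) = |α(v)|, and let I be an (E,q)-locally optimal independent set in G. Then every independent set O in G satisfies w(O) ≤ (k − 1 + 1/q)·w(I). (This is the approximation guarantee of the local search algorithm LS_q, whose output is exactly such an (E,q)-locally optimal IS.) -/

import Mathlib

/-!
The `k`-cycle graph framework of Emek–Shpiro, "Barter Exchange with Bounded
Trading Cycles": a `k`-cycle graph over `n` agents is a finite simple graph whose
nodes `v` are labeled by agent sets `α(v) ⊆ [n]` with `2 ≤ |α(v)| ≤ k`, two distinct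
nodes being adjacent iff their labels intersect.
-/

open Finset

/-- A `k`-cycle graph over `n` agents. -/
structure CycleGraph (n k : ℕ) where
  /-- the node set -/
  V : Type
  fintypeV : Fintype V
  decEqV : DecidableEq V
  /-- the agent label of each node -/
  alpha : V → Finset (Fin n)
  two_le_card : ∀ v, 2 ≤ (alpha v).card
  card_le_k : ∀ v, (alpha v).card ≤ k

attribute [instance] CycleGraph.fintypeV CycleGraph.decEqV

namespace CycleGraph

variable {n k : ℕ}

/-- Adjacency: distinct nodes whose agent labels intersect. -/
def Adj (G : CycleGraph n k) (u v : G.V) : Prop :=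
  u ≠ v ∧ ((G.alpha u) ∩ (G.alpha v)).Nonempty

instance (G : CycleGraph n k) : DecidableRel G.Adj := fun u v =>
  inferInstanceAs (Decidable (u ≠ v ∧ ((G.alpha u) ∩ (G.alpha v)).Nonempty))

/-- Independent set: pairwise non-adjacent nodes, i.e., pairwise disjoint labels. -/
def Indep (G : CycleGraph n k) (I : Finset G.V) : Prop :=
  ∀ u ∈ I, ∀ v ∈ I, u ≠ v → G.alpha u ∩ G.alpha v = ∅

instance (G : CycleGraph n k) (I : Finset G.V) : Decidable (G.Indep I) :=
  inferInstanceAs (Decidable (∀ u ∈ I, ∀ v ∈ I, u ≠ v → G.alpha u ∩ G.alpha v = ∅))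

end CycleGraph

/-- The (closed-out) neighborhood `N_G(U)`: all nodes adjacent to some node of `U`. -/
def CycleGraph.nbhd {n k : ℕ} (G : CycleGraph n k) (U : Finset G.V) : Finset G.V :=
  Finset.univ.filter (fun v => ∃ u ∈ U, G.Adj u v)

/-- `α(U) = ⋃_{v∈U} α(v)`. -/
def CycleGraph.aset {n k : ℕ} (G : CycleGraph n k) (U : Finset G.V) : Finset (Fin n) :=
  U.biUnion G.alpha

/-- An independent set `I` is `(E,q)`-locally optimal if (i) it is a maximal independent
set, and (ii) there is no independent set `X ⊆ N_G(I)` with `|N_G(X) ∩ I| ≤ q` such that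
`I′ = (I ∪ X) ∖ (N_G(X) ∩ I)` is an independent set with `α(I) ⊊ α(I′)`.  (The output of
the local search algorithm `LS_q` is exactly such an independent set.) -/
def CycleGraph.EqLocalOpt {n k : ℕ} (G : CycleGraph n k) (q : ℕ)
    (I : Finset G.V) : Prop :=
  G.Indep I ∧
  (∀ v : G.V, G.Indep (insert v I) → v ∈ I) ∧
  ¬ ∃ X : Finset G.V, X ⊆ G.nbhd I ∧ G.Indep X ∧ (G.nbhd X ∩ I).card ≤ q ∧
      G.Indep ((I ∪ X) \ (G.nbhd X ∩ I)) ∧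
      G.aset I ⊂ G.aset ((I ∪ X) \ (G.nbhd X ∩ I))

section Abstract
variable {ι : Type} [DecidableEq ι]

lemma exists_closed (I R : Finset ι) (ow : ι → Finset ι) (c : ι → ℕ)
    (h1 : ∀ v ∈ R, ow v ⊆ I) (h2 : ∀ v ∈ R, (ow v).card ≤ c v) :
    ∀ (fuel : ℕ) (S : Finset ι), I.card ≤ S.card + fuel → S ⊆ I → S.Nonempty →
      S.card ≤ 1 + ∑ v ∈ R.filter (fun v => ow v ⊆ S ∧ (ow v ∩ S).Nonempty), (c v - 1) →
      ∃ C : Finset ι, C ⊆ I ∧ C.Nonempty ∧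
        (∀ v ∈ R, (ow v ∩ C).Nonempty → ow v ⊆ C) ∧
        C.card ≤ 1 + ∑ v ∈ R.filter (fun v => (ow v ∩ C).Nonempty), (c v - 1) := by
  intro fuel
  induction fuel with
  | zero =>
    intro S hfuel hSI hSne hinv
    have hSeqI : S = I := Finset.eq_of_subset_of_card_le hSI (by omega)
    refine ⟨S, hSI, hSne, ?_, ?_⟩
    · intro v hv _
      rw [hSeqI]; exact h1 v hv
    · refine le_trans hinv ?_
      have : R.filter (fun v => ow v ⊆ S ∧ (ow v ∩ S).Nonempty) ⊆
          R.filter (fun v => (ow v ∩ S).Nonempty) := by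
        intro v hv
        simp only [Finset.mem_filter] at hv ⊢
        exact ⟨hv.1, hv.2.2⟩
      exact Nat.add_le_add_left (Finset.sum_le_sum_of_subset this) 1
  | succ m ih =>
    intro S hfuel hSI hSne hinv
    by_cases hex : ∃ v ∈ R, (ow v ∩ S).Nonempty ∧ ¬ ow v ⊆ S
    · obtain ⟨v, hvR, hvne, hvns⟩ := hex
      set S' := S ∪ ow v with hS'def
      have hSS' : S ⊆ S' := Finset.subset_union_left
      have hS'I : S' ⊆ I := Finset.union_subset hSI (h1 v hvR)
      have hcard1 : (ow v \ S).card + S.card = S'.card := by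
        rw [hS'def, Finset.union_comm]
        exact Finset.card_sdiff_add_card ..
      have hcard2 : (ow v \ S).card + (ow v ∩ S).card = (ow v).card :=
        Finset.card_sdiff_add_card_inter ..
      have hone : 1 ≤ (ow v ∩ S).card := Finset.card_pos.mpr hvne
      have howc : (ow v).card ≤ c v := h2 v hvR
      have hstep : S'.card ≤ S.card + (c v - 1) := by omega
      have hSlt : S.card < S'.card := by
        obtain ⟨x, hx, hxS⟩ := Finset.not_subset.mp hvns
        exact Finset.card_lt_card (Finset.ssubset_iff_of_subset hSS' |>.mpr
          ⟨x, Finset.mem_union_right _ hx, hxS⟩)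
      have hsum : (c v - 1) + ∑ w ∈ R.filter (fun w => ow w ⊆ S ∧ (ow w ∩ S).Nonempty), (c w - 1)
          ≤ ∑ w ∈ R.filter (fun w => ow w ⊆ S' ∧ (ow w ∩ S').Nonempty), (c w - 1) := by
        have hvnotold : v ∉ R.filter (fun w => ow w ⊆ S ∧ (ow w ∩ S).Nonempty) := by
          simp only [Finset.mem_filter]
          rintro ⟨-, hsub, -⟩; exact hvns hsub
        have hins : insert v (R.filter (fun w => ow w ⊆ S ∧ (ow w ∩ S).Nonempty)) ⊆
            R.filter (fun w => ow w ⊆ S' ∧ (ow w ∩ S').Nonempty) := by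
          intro w hw
          rcases Finset.mem_insert.mp hw with rfl | hw
          · refine Finset.mem_filter.mpr ⟨hvR, Finset.subset_union_right, ?_⟩
            obtain ⟨x, hx⟩ := hvne
            exact ⟨x, Finset.mem_inter.mpr ⟨(Finset.mem_inter.mp hx).1,
              hSS' (Finset.mem_inter.mp hx).2⟩⟩
          · obtain ⟨hwR, hws, hwne⟩ := Finset.mem_filter.mp hw
            refine Finset.mem_filter.mpr ⟨hwR, hws.trans hSS', ?_⟩
            obtain ⟨x, hx⟩ := hwne
            exact ⟨x, Finset.mem_inter.mpr ⟨(Finset.mem_inter.mp hx).1,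
              hSS' (Finset.mem_inter.mp hx).2⟩⟩
        calc (c v - 1) + ∑ w ∈ R.filter (fun w => ow w ⊆ S ∧ (ow w ∩ S).Nonempty), (c w - 1)
            = ∑ w ∈ insert v (R.filter (fun w => ow w ⊆ S ∧ (ow w ∩ S).Nonempty)), (c w - 1) :=
              (Finset.sum_insert (f := fun w => c w - 1) hvnotold).symm
          _ ≤ _ := Finset.sum_le_sum_of_subset hins
      exact ih S' (by omega) hS'I (hSne.mono hSS') (by omega)
    · push_neg at hex
      refine ⟨S, hSI, hSne, fun v hv hne => hex v hv hne, ?_⟩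
      refine le_trans hinv ?_
      have : R.filter (fun v => ow v ⊆ S ∧ (ow v ∩ S).Nonempty) ⊆
          R.filter (fun v => (ow v ∩ S).Nonempty) := by
        intro v hv
        simp only [Finset.mem_filter] at hv ⊢
        exact ⟨hv.1, hv.2.2⟩
      exact Nat.add_le_add_left (Finset.sum_le_sum_of_subset this) 1


lemma abstract_key (q : ℕ) (hq : 1 ≤ q)
    (cov : ι → ι → ℕ) (c s zz pp : ι → ℕ) :
    ∀ (N : ℕ) (I R : Finset ι), I.card ≤ N →
    (∀ v ∈ R, 2 ≤ c v) →
    (∀ v ∈ R, c v = ∑ u ∈ I, cov v u) →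
    (∀ u ∈ I, pp u + ((∑ v ∈ R, cov v u) + zz u) = s u) →
    (∀ u ∈ I, 2 ≤ s u) →
    (∀ S : Finset ι, S ⊆ I → S.Nonempty → S.card ≤ q →
        (∀ v ∈ R, (∃ u ∈ S, 0 < cov v u) → ∀ u' ∈ I, 0 < cov v u' → u' ∈ S) →
        (∑ u ∈ S, zz u = 0) → (∑ u ∈ S, pp u = 0)) →
    (q - 1) * I.card ≤ q * ((∑ u ∈ I, zz u) + ∑ v ∈ R, (c v - 1)) := by
  intro N
  induction N with
  | zero =>
    intro I R hN _ _ _ _ _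
    have : I = ∅ := Finset.card_eq_zero.mp (Nat.le_zero.mp hN)
    simp [this]
  | succ m ih =>
    intro I R hN hc2 hc hsum hs2 hH
    rcases Finset.eq_empty_or_nonempty I with rfl | ⟨u₀, hu₀⟩
    · simp
    -- owner sets
    set ow : ι → Finset ι := fun v => I.filter (fun u => 0 < cov v u) with how
    have h1 : ∀ v ∈ R, ow v ⊆ I := fun v _ => Finset.filter_subset _ _
    have h2 : ∀ v ∈ R, (ow v).card ≤ c v := by
      intro v hv
      rw [hc v hv]
      calc (ow v).card = ∑ u ∈ ow v, 1 := by simp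
        _ ≤ ∑ u ∈ ow v, cov v u := Finset.sum_le_sum (by
            intro u hu; exact (Finset.mem_filter.mp hu).2)
        _ ≤ ∑ u ∈ I, cov v u := Finset.sum_le_sum_of_subset (Finset.filter_subset _ _)
    obtain ⟨C, hCI, hCne, hCcl, hCbd⟩ :=
      exists_closed I R ow c h1 h2 I.card {u₀} (by simp)
        (Finset.singleton_subset_iff.mpr hu₀) ⟨u₀, Finset.mem_singleton_self u₀⟩
        (by simp)
    have hRCR : R.filter (fun v => (ow v ∩ C).Nonempty) ⊆ R := Finset.filter_subset _ _
    -- coverage vanishing lemmas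
    have hcov_zero_notRC : ∀ v ∈ R, v ∉ R.filter (fun v => (ow v ∩ C).Nonempty) →
        ∀ u ∈ C, cov v u = 0 := by
      intro v hvR hvnRC u huC
      by_contra hpos
      exact hvnRC (Finset.mem_filter.mpr ⟨hvR,
        ⟨u, Finset.mem_inter.mpr ⟨Finset.mem_filter.mpr ⟨hCI huC, Nat.pos_of_ne_zero hpos⟩, huC⟩⟩⟩)
    have hcov_zero_RC : ∀ v ∈ R.filter (fun v => (ow v ∩ C).Nonempty),
        ∀ u ∈ I, u ∉ C → cov v u = 0 := by
      intro v hvRC u huI hunC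
      by_contra hpos
      have hmem : u ∈ ow v := Finset.mem_filter.mpr ⟨huI, Nat.pos_of_ne_zero hpos⟩
      obtain ⟨-, hne⟩ := Finset.mem_filter.mp hvRC
      exact hunC (hCcl v (hRCR hvRC) hne hmem)
    -- per-component inequality
    have keyC : (q - 1) * C.card ≤
        q * ((∑ u ∈ C, zz u) + ∑ v ∈ R.filter (fun v => (ow v ∩ C).Nonempty), (c v - 1)) := by
      by_cases hZ : ∑ u ∈ C, zz u = 0
      case neg =>
        -- case (a): zz positive on C
        calc (q - 1) * C.card ≤ q * C.card := Nat.mul_le_mul_right _ (by omega)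
          _ ≤ _ := Nat.mul_le_mul_left _ (by omega)
      case pos =>
        by_cases hP : ∑ u ∈ C, pp u = 0
        case neg =>
          -- case (c)
          have hclosedC : ∀ v ∈ R, (∃ u ∈ C, 0 < cov v u) → ∀ u' ∈ I, 0 < cov v u' → u' ∈ C := by
            intro v hvR hex u' hu' hpos'
            obtain ⟨u, huC, hpos⟩ := hex
            have hne : (ow v ∩ C).Nonempty :=
              ⟨u, Finset.mem_inter.mpr ⟨Finset.mem_filter.mpr ⟨hCI huC, hpos⟩, huC⟩⟩
            exact hCcl v hvR hne (Finset.mem_filter.mpr ⟨hu', hpos'⟩)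
          have hcq : q + 1 ≤ C.card := by
            by_contra hlt
            exact hP (hH C hCI hCne (by omega) hclosedC hZ)
          have h1C : 1 ≤ C.card := by omega
          have hmul : (q - 1) * C.card ≤ q * (C.card - 1) := by
            zify [hq, h1C]
            nlinarith [hcq]
          calc (q - 1) * C.card ≤ q * (C.card - 1) := hmul
            _ ≤ _ := Nat.mul_le_mul_left _ (by omega)
        case pos =>
          -- case (b) fully covered by R
          have hru : ∀ u ∈ C, s u ≤ ∑ v ∈ R, cov v u := by
            intro u huC
            have hz : zz u = 0 := (Finset.sum_eq_zero_iff).mp hZ u huC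
            have hp : pp u = 0 := (Finset.sum_eq_zero_iff).mp hP u huC
            have := hsum u (hCI huC)
            omega
          have h2m : 2 * C.card ≤ ∑ v ∈ R.filter (fun v => (ow v ∩ C).Nonempty), c v := by
            have hsplit := Finset.sum_filter_add_sum_filter_not R
              (fun v => (ow v ∩ C).Nonempty) (fun v => ∑ u ∈ C, cov v u)
            have hzero : ∑ v ∈ R.filter (fun v => ¬ (ow v ∩ C).Nonempty),
                ∑ u ∈ C, cov v u = 0 := by
              apply Finset.sum_eq_zero
              intro v hv
              obtain ⟨hvR, hvn⟩ := Finset.mem_filter.mp hv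
              apply Finset.sum_eq_zero
              intro u hu
              refine hcov_zero_notRC v hvR ?_ u hu
              intro hmem
              exact hvn (Finset.mem_filter.mp hmem).2
            have hch : ∑ v ∈ R, ∑ u ∈ C, cov v u
                = ∑ v ∈ R.filter (fun v => (ow v ∩ C).Nonempty), ∑ u ∈ C, cov v u := by
              omega
            calc 2 * C.card = ∑ _u ∈ C, 2 := by simp [Nat.mul_comm]
              _ ≤ ∑ u ∈ C, s u := Finset.sum_le_sum (fun u hu => hs2 u (hCI hu))
              _ ≤ ∑ u ∈ C, ∑ v ∈ R, cov v u := Finset.sum_le_sum hru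
              _ = ∑ v ∈ R, ∑ u ∈ C, cov v u := Finset.sum_comm
              _ = ∑ v ∈ R.filter (fun v => (ow v ∩ C).Nonempty), ∑ u ∈ C, cov v u := hch
              _ ≤ ∑ v ∈ R.filter (fun v => (ow v ∩ C).Nonempty), c v := Finset.sum_le_sum (by
                  intro v hv
                  rw [hc v (hRCR hv)]
                  exact Finset.sum_le_sum_of_subset hCI)
          have hE : C.card ≤ ∑ v ∈ R.filter (fun v => (ow v ∩ C).Nonempty), (c v - 1) := by
            have h2E : ∑ v ∈ R.filter (fun v => (ow v ∩ C).Nonempty), c v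
                ≤ 2 * ∑ v ∈ R.filter (fun v => (ow v ∩ C).Nonempty), (c v - 1) := by
              rw [Finset.mul_sum]
              apply Finset.sum_le_sum
              intro v hv
              have := hc2 v (hRCR hv)
              omega
            omega
          calc (q - 1) * C.card ≤ q * C.card := Nat.mul_le_mul_right _ (by omega)
            _ ≤ _ := Nat.mul_le_mul_left _ (by omega)
    -- recurse on the rest
    have hCcard : 1 ≤ C.card := Finset.card_pos.mpr hCne
    have hCIcard : C.card ≤ I.card := Finset.card_le_card hCI
    have hsdcard : (I \ C).card = I.card - C.card := Finset.card_sdiff_of_subset hCI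
    have ihap := ih (I \ C) (R \ R.filter (fun v => (ow v ∩ C).Nonempty)) (by omega)
      (fun v hv => hc2 v (Finset.mem_sdiff.mp hv).1)
      (by
        intro v hv
        obtain ⟨hvR, hvnRC⟩ := Finset.mem_sdiff.mp hv
        have hsd : (∑ u ∈ I \ C, cov v u) + ∑ u ∈ C, cov v u = ∑ u ∈ I, cov v u :=
          Finset.sum_sdiff hCI
        have hzero : ∑ u ∈ C, cov v u = 0 :=
          Finset.sum_eq_zero (fun u hu => hcov_zero_notRC v hvR hvnRC u hu)
        rw [hc v hvR]
        omega)
      (by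
        intro u hu
        obtain ⟨huI, hunC⟩ := Finset.mem_sdiff.mp hu
        have h := hsum u huI
        have hsd : (∑ v ∈ R \ R.filter (fun v => (ow v ∩ C).Nonempty), cov v u)
            + ∑ v ∈ R.filter (fun v => (ow v ∩ C).Nonempty), cov v u = ∑ v ∈ R, cov v u :=
          Finset.sum_sdiff hRCR
        have hzero : ∑ v ∈ R.filter (fun v => (ow v ∩ C).Nonempty), cov v u = 0 :=
          Finset.sum_eq_zero (fun v hv => hcov_zero_RC v hv u huI hunC)
        omega)
      (fun u hu => hs2 u (Finset.mem_sdiff.mp hu).1)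
      (by
        intro S hSI' hSne hSq hcl hz
        apply hH S (hSI'.trans (Finset.sdiff_subset)) hSne hSq ?_ hz
        intro v hvR hex u' hu' hpos'
        by_cases hvRC : v ∈ R.filter (fun v => (ow v ∩ C).Nonempty)
        · obtain ⟨u, huS, hpos⟩ := hex
          have hu' : u ∈ I \ C := hSI' huS
          have := hcov_zero_RC v hvRC u (Finset.mem_sdiff.mp hu').1 (Finset.mem_sdiff.mp hu').2
          omega
        · by_cases hu'C : u' ∈ C
          · have := hcov_zero_notRC v hvR hvRC u' hu'C
            omega
          · exact hcl v (Finset.mem_sdiff.mpr ⟨hvR, hvRC⟩) hex u'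
              (Finset.mem_sdiff.mpr ⟨hu', hu'C⟩) hpos')
    -- combine
    have hzsplit : (∑ u ∈ I \ C, zz u) + ∑ u ∈ C, zz u = ∑ u ∈ I, zz u :=
      Finset.sum_sdiff hCI
    have hesplit : (∑ v ∈ R \ R.filter (fun v => (ow v ∩ C).Nonempty), (c v - 1))
        + ∑ v ∈ R.filter (fun v => (ow v ∩ C).Nonempty), (c v - 1) = ∑ v ∈ R, (c v - 1) :=
      Finset.sum_sdiff hRCR
    have hIcard : I.card = C.card + (I \ C).card := by omega
    rw [hIcard, Nat.mul_add]
    have hrhs : q * ((∑ u ∈ I, zz u) + ∑ v ∈ R, (c v - 1)) =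
        q * ((∑ u ∈ C, zz u) + ∑ v ∈ R.filter (fun v => (ow v ∩ C).Nonempty), (c v - 1))
        + q * ((∑ u ∈ I \ C, zz u) + ∑ v ∈ R \ R.filter (fun v => (ow v ∩ C).Nonempty), (c v - 1)) := by
      rw [← hzsplit, ← hesplit]
      ring
    rw [hrhs]
    exact Nat.add_le_add keyC ihap

end Abstract

namespace CycleGraph

variable {n k : ℕ} (G : CycleGraph n k)

/-- number of common agents -/
def covn (v u : G.V) : ℕ := ((G.alpha v) ∩ (G.alpha u)).card

/-- number of agents of `v` lying in `α(I)` -/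
def cp (I : Finset G.V) (v : G.V) : ℕ := ((G.alpha v) ∩ (G.aset I)).card

lemma inter_aset_card {I : Finset G.V} (hInd : G.Indep I) (B : Finset (Fin n)) :
    (B ∩ G.aset I).card = ∑ u ∈ I, (B ∩ G.alpha u).card := by
  have h1 : B ∩ G.aset I = I.biUnion (fun u => B ∩ G.alpha u) := by
    ext a
    simp only [Finset.mem_inter, CycleGraph.aset, Finset.mem_biUnion]
    tauto
  rw [h1]
  apply Finset.card_biUnion
  intro u hu u' hu' hne
  have h := hInd u hu u' hu' hne
  rw [Function.onFun, Finset.disjoint_left]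
  intro a ha ha'
  have : a ∈ G.alpha u ∩ G.alpha u' :=
    Finset.mem_inter.mpr ⟨(Finset.mem_inter.mp ha).2, (Finset.mem_inter.mp ha').2⟩
  rw [h] at this
  exact absurd this (Finset.notMem_empty a)

lemma cp_eq_sum {I : Finset G.V} (hInd : G.Indep I) (v : G.V) :
    G.cp I v = ∑ u ∈ I, G.covn v u :=
  G.inter_aset_card hInd (G.alpha v)

lemma one_le_cp {I : Finset G.V} (hInd : G.Indep I)
    (hmax : ∀ v : G.V, G.Indep (insert v I) → v ∈ I) (v : G.V) :
    1 ≤ G.cp I v := by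
  by_cases hvI : v ∈ I
  · have hsub : G.alpha v ⊆ G.alpha v ∩ G.aset I := by
      intro a ha
      exact Finset.mem_inter.mpr ⟨ha, Finset.mem_biUnion.mpr ⟨v, hvI, ha⟩⟩
    have := Finset.card_le_card hsub
    have h2 := G.two_le_card v
    unfold cp
    omega
  · have hni : ¬ G.Indep (insert v I) := fun h => hvI (hmax v h)
    unfold Indep at hni
    push_neg at hni
    obtain ⟨x, hx, y, hy, hxy, hne⟩ := hni
    rcases Finset.mem_insert.mp hx with rfl | hxI
    · rcases Finset.mem_insert.mp hy with rfl | hyI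
      · exact absurd rfl hxy
      · have hne' : (G.alpha x ∩ G.alpha y).Nonempty :=
          hne
        obtain ⟨a, ha⟩ := hne'
        apply Finset.card_pos.mpr
        exact ⟨a, Finset.mem_inter.mpr ⟨(Finset.mem_inter.mp ha).1,
          Finset.mem_biUnion.mpr ⟨y, hyI, (Finset.mem_inter.mp ha).2⟩⟩⟩
    · rcases Finset.mem_insert.mp hy with rfl | hyI
      · have hne' : (G.alpha x ∩ G.alpha y).Nonempty :=
          hne
        obtain ⟨a, ha⟩ := hne'
        apply Finset.card_pos.mpr
        exact ⟨a, Finset.mem_inter.mpr ⟨(Finset.mem_inter.mp ha).2,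
          Finset.mem_biUnion.mpr ⟨x, hxI, (Finset.mem_inter.mp ha).1⟩⟩⟩
      · exact absurd (hInd x hxI y hyI hxy) (Finset.nonempty_iff_ne_empty.mp hne)

/-- The key consequence of local optimality: a small closed fully-covered set of
`I`-nodes carries no privately-covering `O`-nodes. -/
lemma no_bad_S {q : ℕ} {I O : Finset G.V} (hI : G.EqLocalOpt q I) (hO : G.Indep O)
    (S : Finset G.V) (hSI : S ⊆ I) (hSne : S.Nonempty) (hScard : S.card ≤ q)
    (hclosed : ∀ v ∈ O.filter (fun v => G.cp I v ≠ 1), (∃ u ∈ S, 0 < G.covn v u) →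
        ∀ u' ∈ I, 0 < G.covn v u' → u' ∈ S)
    (hzz : ∀ u ∈ S, G.alpha u ⊆ G.aset O) :
    ∀ u ∈ S, ∀ v ∈ O.filter (fun v => G.cp I v = 1), G.covn v u = 0 := by
  classical
  obtain ⟨hIind, hmax, hnoswap⟩ := hI
  by_contra hcon
  push_neg at hcon
  obtain ⟨ustar, hustarS, vstar, hvstarP, hvstar_cov⟩ := hcon
  obtain ⟨hvstarO, hvstarcp⟩ := Finset.mem_filter.mp hvstarP
  -- the swap set
  set X : Finset G.V := O.filter (fun v => v ∉ I ∧ ∀ u' ∈ I, 0 < G.covn v u' → u' ∈ S)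
    with hXdef
  have hXO : X ⊆ O := Finset.filter_subset _ _
  have hXnI : ∀ x ∈ X, x ∉ I := fun x hx => (Finset.mem_filter.mp hx).2.1
  -- any O-node covering an agent of S is in I or X
  have key_w : ∀ w ∈ O, ∀ u ∈ S, 0 < G.covn w u → w ∈ I ∨ w ∈ X := by
    intro w hwO u huS hpos
    by_cases hwI : w ∈ I
    · exact Or.inl hwI
    · right
      refine Finset.mem_filter.mpr ⟨hwO, hwI, ?_⟩
      by_cases hcp : G.cp I w = 1
      · -- private node: its unique covered agent lies in α(u)
        obtain ⟨a, ha⟩ := Finset.card_eq_one.mp hcp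
        obtain ⟨b, hb⟩ := Finset.card_pos.mp hpos
        have hbmem : b ∈ G.alpha w ∩ G.aset I := by
          refine Finset.mem_inter.mpr ⟨(Finset.mem_inter.mp hb).1, ?_⟩
          exact Finset.mem_biUnion.mpr ⟨u, hSI huS, (Finset.mem_inter.mp hb).2⟩
        have hba : b = a := by
          have := ha ▸ hbmem
          exact Finset.mem_singleton.mp this
        intro u' hu' hpos'
        obtain ⟨b', hb'⟩ := Finset.card_pos.mp hpos'
        have hb'mem : b' ∈ G.alpha w ∩ G.aset I := by
          refine Finset.mem_inter.mpr ⟨(Finset.mem_inter.mp hb').1, ?_⟩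
          exact Finset.mem_biUnion.mpr ⟨u', hu', (Finset.mem_inter.mp hb').2⟩
        have hb'a : b' = a := Finset.mem_singleton.mp (ha ▸ hb'mem)
        -- so b = b' belongs to α(u) ∩ α(u'), forcing u' = u
        by_contra hu'S
        have huune : u' ≠ u := fun h => hu'S (h ▸ huS)
        have hdisj := hIind u' hu' u (hSI huS) huune
        have : b ∈ G.alpha u' ∩ G.alpha u := by
          refine Finset.mem_inter.mpr ⟨?_, (Finset.mem_inter.mp hb).2⟩
          have : b' ∈ G.alpha u' := (Finset.mem_inter.mp hb').2
          rwa [hb'a, ← hba] at this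
        rw [hdisj] at this
        exact absurd this (Finset.notMem_empty b)
      · exact hclosed w (Finset.mem_filter.mpr ⟨hwO, hcp⟩) ⟨u, huS, hpos⟩
  -- X is in the neighborhood of I
  have c1 : X ⊆ G.nbhd I := by
    intro x hx
    obtain ⟨hxO, hxnI, -⟩ := Finset.mem_filter.mp hx
    have h1 : 1 ≤ G.cp I x := G.one_le_cp hIind hmax x
    obtain ⟨a, ha⟩ := Finset.card_pos.mp h1
    obtain ⟨haa, haI⟩ := Finset.mem_inter.mp ha
    obtain ⟨u, huI, hau⟩ := Finset.mem_biUnion.mp haI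
    refine Finset.mem_filter.mpr ⟨Finset.mem_univ x, u, huI, ?_, ?_⟩
    · exact fun h => hxnI (h ▸ huI)
    · exact ⟨a, Finset.mem_inter.mpr ⟨hau, haa⟩⟩
  have c2 : G.Indep X := fun u hu v hv hne => hO u (hXO hu) v (hXO hv) hne
  have hsub : G.nbhd X ∩ I ⊆ S := by
    intro u hu
    obtain ⟨hunb, huI⟩ := Finset.mem_inter.mp hu
    obtain ⟨-, x, hxX, hadj⟩ := Finset.mem_filter.mp hunb
    obtain ⟨hxu, hne⟩ := hadj
    obtain ⟨a, ha⟩ := hne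
    have hpos : 0 < G.covn x u := Finset.card_pos.mpr ⟨a, ha⟩
    exact (Finset.mem_filter.mp hxX).2.2 u huI hpos
  have c3 : (G.nbhd X ∩ I).card ≤ q :=
    le_trans (Finset.card_le_card hsub) hScard
  have c4 : G.Indep ((I ∪ X) \ (G.nbhd X ∩ I)) := by
    intro a ha b hb hne
    obtain ⟨haU, hanb⟩ := Finset.mem_sdiff.mp ha
    obtain ⟨hbU, hbnb⟩ := Finset.mem_sdiff.mp hb
    rcases Finset.mem_union.mp haU with haI | haX
    · rcases Finset.mem_union.mp hbU with hbI | hbX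
      · exact hIind a haI b hbI hne
      · by_contra hcontra
        have hne' : (G.alpha b ∩ G.alpha a).Nonempty := by
          rw [Finset.inter_comm]
          exact Finset.nonempty_iff_ne_empty.mpr hcontra
        have : a ∈ G.nbhd X :=
          Finset.mem_filter.mpr ⟨Finset.mem_univ a, b, hbX, hne.symm, hne'⟩
        exact hanb (Finset.mem_inter.mpr ⟨this, haI⟩)
    · rcases Finset.mem_union.mp hbU with hbI | hbX
      · by_contra hcontra
        have hne' : (G.alpha a ∩ G.alpha b).Nonempty :=
          Finset.nonempty_iff_ne_empty.mpr hcontra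
        have : b ∈ G.nbhd X :=
          Finset.mem_filter.mpr ⟨Finset.mem_univ b, a, haX, hne, hne'⟩
        exact hbnb (Finset.mem_inter.mpr ⟨this, hbI⟩)
      · exact hO a (hXO haX) b (hXO hbX) hne
  -- v* is in X
  have hvstarX : vstar ∈ X := by
    have hvnI : vstar ∉ I := by
      intro hvI
      have hsub' : G.alpha vstar ⊆ G.alpha vstar ∩ G.aset I := by
        intro a ha
        exact Finset.mem_inter.mpr ⟨ha, Finset.mem_biUnion.mpr ⟨vstar, hvI, ha⟩⟩
      have hcard := Finset.card_le_card hsub'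
      have h2 := G.two_le_card vstar
      unfold cp at hvstarcp
      omega
    rcases key_w vstar hvstarO ustar hustarS (Nat.pos_of_ne_zero hvstar_cov) with h | h
    · exact absurd h hvnI
    · exact h
  have hvstarI' : vstar ∈ (I ∪ X) \ (G.nbhd X ∩ I) := by
    refine Finset.mem_sdiff.mpr ⟨Finset.mem_union_right _ hvstarX, ?_⟩
    intro hmem
    exact (hXnI vstar hvstarX) (Finset.mem_inter.mp hmem).2
  have c5 : G.aset I ⊂ G.aset ((I ∪ X) \ (G.nbhd X ∩ I)) := by
    rw [Finset.ssubset_def]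
    constructor
    · -- α(I) ⊆ α(I')
      intro a ha
      obtain ⟨u, huI, hau⟩ := Finset.mem_biUnion.mp ha
      by_cases hu : u ∈ G.nbhd X ∩ I
      · have huS : u ∈ S := hsub hu
        have haO : a ∈ G.aset O := hzz u huS hau
        obtain ⟨w, hwO, haw⟩ := Finset.mem_biUnion.mp haO
        have hwpos : 0 < G.covn w u :=
          Finset.card_pos.mpr ⟨a, Finset.mem_inter.mpr ⟨haw, hau⟩⟩
        rcases key_w w hwO u huS hwpos with hwI | hwX
        · -- impossible: w = u would make u ∈ O adjacent to X
          exfalso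
          have hwu : w = u := by
            by_contra hne
            have hdisj := hIind w hwI u huI hne
            have : a ∈ G.alpha w ∩ G.alpha u := Finset.mem_inter.mpr ⟨haw, hau⟩
            rw [hdisj] at this
            exact absurd this (Finset.notMem_empty a)
          have huO : u ∈ O := hwu ▸ hwO
          obtain ⟨hunb, -⟩ := Finset.mem_inter.mp hu
          obtain ⟨-, x, hxX, hadj⟩ := Finset.mem_filter.mp hunb
          obtain ⟨hxu, hne⟩ := hadj
          have hdisj := hO x (hXO hxX) u huO hxu
          obtain ⟨b, hb⟩ := hne
          rw [hdisj] at hb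
          exact absurd hb (Finset.notMem_empty b)
        · refine Finset.mem_biUnion.mpr ⟨w, ?_, haw⟩
          refine Finset.mem_sdiff.mpr ⟨Finset.mem_union_right _ hwX, ?_⟩
          intro hmem
          exact (hXnI w hwX) (Finset.mem_inter.mp hmem).2
      · refine Finset.mem_biUnion.mpr ⟨u, ?_, hau⟩
        exact Finset.mem_sdiff.mpr ⟨Finset.mem_union_left _ huI, hu⟩
    · -- strictness via a fresh agent of v*
      intro hcontra
      have hlt : (G.alpha vstar ∩ G.aset I).card < (G.alpha vstar).card := by
        have h2 := G.two_le_card vstar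
        unfold cp at hvstarcp
        omega
      have hssub : G.alpha vstar ∩ G.aset I ⊂ G.alpha vstar := by
        refine Finset.ssubset_iff_subset_ne.mpr ⟨Finset.inter_subset_left, ?_⟩
        intro h
        rw [h] at hlt
        omega
      obtain ⟨b, hbv, hbni⟩ := Finset.exists_of_ssubset hssub
      have hbnI : b ∉ G.aset I := fun h => hbni (Finset.mem_inter.mpr ⟨hbv, h⟩)
      have hbI' : b ∈ G.aset ((I ∪ X) \ (G.nbhd X ∩ I)) :=
        Finset.mem_biUnion.mpr ⟨vstar, hvstarI', hbv⟩
      exact hbnI (hcontra hbI')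
  exact hnoswap ⟨X, c1, c2, c3, c4, c5⟩

end CycleGraph
/-- Theorem: approximation ratio of `LS_q`.  Let `k ≥ 3`, `q ≥ 1`,
let `G` be a `k`-cycle graph with uniform node weights `w(v) = |α(v)|`, and let `I` be an
`(E,q)`-locally optimal independent set.  Then every independent set `O` satisfies
`w(O) ≤ (k − 1 + 1/q)·w(I)`. -/
theorem eqLocalOpt_approx (n k q : ℕ) (hk : 3 ≤ k) (hq : 1 ≤ q)
    (G : CycleGraph n k) (I : Finset G.V) (hI : G.EqLocalOpt q I)
    (O : Finset G.V) (hO : G.Indep O) :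
    (∑ v ∈ O, ((G.alpha v).card : ℝ)) ≤
      ((k : ℝ) - 1 + 1 / (q : ℝ)) * ∑ v ∈ I, ((G.alpha v).card : ℝ) := by
  classical
  have hIind : G.Indep I := hI.1
  have hmax : ∀ v : G.V, G.Indep (insert v I) → v ∈ I := hI.2.1
  have hcp1 : ∀ v : G.V, 1 ≤ G.cp I v := fun v => G.one_le_cp hIind hmax v
  have hc : ∀ v, G.cp I v = ∑ u ∈ I, G.covn v u := G.cp_eq_sum hIind
  have hR2 : ∀ v ∈ O.filter (fun v => G.cp I v ≠ 1), 2 ≤ G.cp I v := by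
    intro v hv
    have := (Finset.mem_filter.mp hv).2
    have := hcp1 v
    omega
  -- per-node coverage split
  have hOsplit : ∀ u : G.V, (G.alpha u ∩ G.aset O).card =
      (∑ v ∈ O.filter (fun v => G.cp I v = 1), G.covn v u)
      + ∑ v ∈ O.filter (fun v => G.cp I v ≠ 1), G.covn v u := by
    intro u
    simp only [ne_eq]
    have h1 : (G.alpha u ∩ G.aset O).card = ∑ v ∈ O, (G.alpha u ∩ G.alpha v).card :=
      G.inter_aset_card hO _
    have h2 : ∑ v ∈ O, (G.alpha u ∩ G.alpha v).card = ∑ v ∈ O, G.covn v u := by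
      apply Finset.sum_congr rfl
      intro v _
      rw [CycleGraph.covn, Finset.inter_comm]
    rw [h1, h2,
      ← Finset.sum_filter_add_sum_filter_not O (fun v => G.cp I v = 1) (fun v => G.covn v u)]
  -- abstract quantities
  set zz : G.V → ℕ := fun u => (G.alpha u).card - (G.alpha u ∩ G.aset O).card with hzzdef
  set pp : G.V → ℕ := fun u => ∑ v ∈ O.filter (fun v => G.cp I v = 1), G.covn v u with hppdef
  have hinterle : ∀ u : G.V, (G.alpha u ∩ G.aset O).card ≤ (G.alpha u).card :=
    fun u => Finset.card_le_card Finset.inter_subset_left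
  have hsu : ∀ u ∈ I, pp u +
      ((∑ v ∈ O.filter (fun v => G.cp I v ≠ 1), G.covn v u) + zz u) = (G.alpha u).card := by
    intro u _
    have h1 := hOsplit u
    have h2 := hinterle u
    simp only [hzzdef, hppdef]
    simp only [ne_eq] at h1 ⊢
    omega
  -- hypothesis for the abstract key lemma, from local optimality
  have hHyp : ∀ S : Finset G.V, S ⊆ I → S.Nonempty → S.card ≤ q →
      (∀ v ∈ O.filter (fun v => G.cp I v ≠ 1), (∃ u ∈ S, 0 < G.covn v u) →
        ∀ u' ∈ I, 0 < G.covn v u' → u' ∈ S) →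
      (∑ u ∈ S, zz u = 0) → (∑ u ∈ S, pp u = 0) := by
    intro S hSI hSne hSq hcl hz
    have hcov : ∀ u ∈ S, G.alpha u ⊆ G.aset O := by
      intro u huS
      have hzu : zz u = 0 := (Finset.sum_eq_zero_iff).mp hz u huS
      have h2 := hinterle u
      have hge : (G.alpha u).card ≤ (G.alpha u ∩ G.aset O).card := by
        simp only [hzzdef] at hzu
        omega
      have heq := Finset.eq_of_subset_of_card_le Finset.inter_subset_left hge
      intro a ha
      have : a ∈ G.alpha u ∩ G.aset O := heq.symm ▸ ha
      exact (Finset.mem_inter.mp this).2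
    have hnb := G.no_bad_S hI hO S hSI hSne hSq hcl hcov
    apply Finset.sum_eq_zero
    intro u huS
    apply Finset.sum_eq_zero
    intro v hvP
    exact hnb u huS v hvP
  have hKEY := abstract_key q hq G.covn (G.cp I) (fun u => (G.alpha u).card) zz pp
    I.card I (O.filter (fun v => G.cp I v ≠ 1)) le_rfl hR2 (fun v _ => hc v) hsu
    (fun u _ => G.two_le_card u) hHyp
  -- ℕ-level bookkeeping
  set Z : ℕ := ∑ u ∈ I, zz u with hZdef
  set E : ℕ := ∑ v ∈ O.filter (fun v => G.cp I v ≠ 1), (G.cp I v - 1) with hEdef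
  set p : ℕ := (O.filter (fun v => G.cp I v = 1)).card with hpdef
  set Rc : ℕ := (O.filter (fun v => G.cp I v ≠ 1)).card with hRcdef
  have hrE : ∑ v ∈ O.filter (fun v => G.cp I v ≠ 1), G.cp I v = E + Rc := by
    have : ∀ v ∈ O.filter (fun v => G.cp I v ≠ 1), G.cp I v = (G.cp I v - 1) + 1 := by
      intro v hv
      have := hR2 v hv
      omega
    rw [Finset.sum_congr rfl this, Finset.sum_add_distrib]
    simp [hEdef, hRcdef]
  have hWsum : ∑ u ∈ I, (G.alpha u).card = Z + (p + (E + Rc)) := by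
    have h1 : ∑ u ∈ I, (G.alpha u).card = (∑ u ∈ I, pp u)
        + ((∑ u ∈ I, ∑ v ∈ O.filter (fun v => G.cp I v ≠ 1), G.covn v u) + Z) := by
      rw [hZdef, ← Finset.sum_add_distrib, ← Finset.sum_add_distrib]
      exact (Finset.sum_congr rfl hsu).symm
    have h2 : ∑ u ∈ I, pp u = p := by
      simp only [hppdef]
      rw [Finset.sum_comm]
      have : ∀ v ∈ O.filter (fun v => G.cp I v = 1), ∑ u ∈ I, G.covn v u = 1 := by
        intro v hv
        rw [← hc v]
        exact (Finset.mem_filter.mp hv).2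
      rw [Finset.sum_congr rfl this]
      simp [hpdef]
    have h3 : ∑ u ∈ I, ∑ v ∈ O.filter (fun v => G.cp I v ≠ 1), G.covn v u = E + Rc := by
      rw [Finset.sum_comm, ← hrE]
      apply Finset.sum_congr rfl
      intro v _
      exact (hc v).symm
    omega
  have hWk : ∑ u ∈ I, (G.alpha u).card ≤ k * I.card := by
    calc ∑ u ∈ I, (G.alpha u).card ≤ ∑ _u ∈ I, k :=
          Finset.sum_le_sum (fun u _ => G.card_le_k u)
      _ = k * I.card := by rw [Finset.sum_const]; ring
  have hOA : ∑ v ∈ O, (G.alpha v).card ≤ k * p + k * Rc := by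
    rw [← Finset.sum_filter_add_sum_filter_not O (fun v => G.cp I v = 1)
      (fun v => (G.alpha v).card)]
    have h1 : ∑ v ∈ O.filter (fun v => G.cp I v = 1), (G.alpha v).card ≤ k * p := by
      calc ∑ v ∈ O.filter (fun v => G.cp I v = 1), (G.alpha v).card
          ≤ ∑ _v ∈ O.filter (fun v => G.cp I v = 1), k :=
            Finset.sum_le_sum (fun v _ => G.card_le_k v)
        _ = k * p := by rw [Finset.sum_const, hpdef]; ring
    have h2 : ∑ v ∈ O.filter (fun v => ¬ G.cp I v = 1), (G.alpha v).card ≤ k * Rc := by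
      calc ∑ v ∈ O.filter (fun v => ¬ G.cp I v = 1), (G.alpha v).card
          ≤ ∑ _v ∈ O.filter (fun v => ¬ G.cp I v = 1), k :=
            Finset.sum_le_sum (fun v _ => G.card_le_k v)
        _ = k * Rc := by rw [Finset.sum_const, hRcdef]; ring
    omega
  -- move to ℝ
  have hq0 : (0:ℝ) < (q:ℝ) := by exact_mod_cast hq
  have hcastA : (∑ v ∈ O, ((G.alpha v).card : ℝ)) = ((∑ v ∈ O, (G.alpha v).card : ℕ) : ℝ) := by
    push_cast
    rfl
  have hcastW : (∑ v ∈ I, ((G.alpha v).card : ℝ)) = ((∑ v ∈ I, (G.alpha v).card : ℕ) : ℝ) := by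
    push_cast
    rfl
  rw [hcastA, hcastW]
  set NA : ℕ := ∑ v ∈ O, (G.alpha v).card with hNA
  set NW : ℕ := ∑ v ∈ I, (G.alpha v).card with hNW
  have f1 : (NA : ℝ) ≤ (k:ℝ) * p + (k:ℝ) * Rc := by exact_mod_cast hOA
  have f2 : (NW : ℝ) = (Z:ℝ) + ((p:ℝ) + ((E:ℝ) + (Rc:ℝ))) := by exact_mod_cast hWsum
  have f3 : (NW : ℝ) ≤ (k:ℝ) * I.card := by exact_mod_cast hWk
  have f4 : ((q:ℝ) - 1) * (I.card : ℝ) ≤ (q:ℝ) * ((Z:ℝ) + (E:ℝ)) := by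
    have h := hKEY
    have h' : (((q - 1) * I.card : ℕ) : ℝ) ≤ ((q * (Z + E) : ℕ) : ℝ) := by exact_mod_cast h
    push_cast [Nat.cast_sub hq] at h'
    exact_mod_cast h'
  have hq1 : (1:ℝ) ≤ (q:ℝ) := by exact_mod_cast hq
  have hk0 : (0:ℝ) ≤ (k:ℝ) := by positivity
  have t1 : (q:ℝ) * NA ≤ (q:ℝ) * ((k:ℝ) * p + (k:ℝ) * Rc) :=
    mul_le_mul_of_nonneg_left f1 (le_of_lt hq0)
  have t2 : ((q:ℝ) - 1) * NW ≤ ((q:ℝ) - 1) * ((k:ℝ) * I.card) :=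
    mul_le_mul_of_nonneg_left f3 (by linarith)
  have t3 : (k:ℝ) * (((q:ℝ) - 1) * (I.card:ℝ)) ≤ (k:ℝ) * ((q:ℝ) * ((Z:ℝ) + (E:ℝ))) :=
    mul_le_mul_of_nonneg_left f4 hk0
  have f2' : (q:ℝ) * (k:ℝ) * NW = (q:ℝ)*(k:ℝ)*(Z:ℝ) + (q:ℝ)*(k:ℝ)*(p:ℝ)
      + (q:ℝ)*(k:ℝ)*(E:ℝ) + (q:ℝ)*(k:ℝ)*(Rc:ℝ) := by rw [f2]; ring
  have hmain : (q:ℝ) * NA ≤ ((q:ℝ) * (k:ℝ) - (q:ℝ) + 1) * NW := by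
    nlinarith [t1, t2, t3, f2']
  have hgoal : (NA:ℝ) ≤ ((k:ℝ) - 1 + 1/(q:ℝ)) * NW := by
    have hne : (q:ℝ) ≠ 0 := ne_of_gt hq0
    rw [show ((k:ℝ) - 1 + 1/(q:ℝ)) = ((q:ℝ) * (k:ℝ) - (q:ℝ) + 1) / (q:ℝ) by
      field_simp]
    rw [div_mul_eq_mul_div, le_div_iff₀ hq0, mul_comm (NA:ℝ) (q:ℝ)]
    exact hmain
  exact hgoal
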